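/- One-step in-tube recursion bound. In the stochastic inner recursion setup, for every m = 1, ..., M−1, E[‖e_{m+1}‖² · 1_{τ_r > m}] ≤ ρ_r² · E[‖e_m‖² · 1_{τ_r > m}] + σ²ν². -/

import Mathlib

open MeasureTheory ProbabilityTheory

noncomputable def traj {d : ℕ} (F : EuclideanSpace ℝ (Fin d) → EuclideanSpace ℝ (Fin d))
    (z1 : EuclideanSpace ℝ (Fin d)) (σ : ℝ) (v : ℕ → EuclideanSpace ℝ (Fin d)) :
    ℕ → EuclideanSpace ℝ (Fin d)
  | 0 => z1 + σ • v 0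
  | (k+1) => F (traj F z1 σ v k) + σ • v (k+1)

lemma traj_congr {d : ℕ} (F : EuclideanSpace ℝ (Fin d) → EuclideanSpace ℝ (Fin d))
    (z1 : EuclideanSpace ℝ (Fin d)) (σ : ℝ) {v w : ℕ → EuclideanSpace ℝ (Fin d)} :
    ∀ k, (∀ i, i ≤ k → v i = w i) → traj F z1 σ v k = traj F z1 σ w k := by
  intro k
  induction k with
  | zero => intro h; simp [traj, h 0 le_rfl]
  | succ n ih =>
    intro h
    simp only [traj, ih (fun i hi => h i (hi.trans (Nat.le_succ n))), h (n+1) le_rfl]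

lemma traj_measurable {d : ℕ} {α : Type*} [MeasurableSpace α]
    {F : EuclideanSpace ℝ (Fin d) → EuclideanSpace ℝ (Fin d)} (hF : Measurable F)
    (z1 : EuclideanSpace ℝ (Fin d)) (σ : ℝ) {L : α → ℕ → EuclideanSpace ℝ (Fin d)}
    (hL : ∀ i, Measurable (fun a => L a i)) (k : ℕ) :
    Measurable (fun a => traj F z1 σ (L a) k) := by
  induction k with
  | zero => exact measurable_const.add ((hL 0).const_smul σ)
  | succ n ih => exact (hF.comp ih).add ((hL (n+1)).const_smul σ)

lemma coord_abs_le_norm {d : ℕ} (x : EuclideanSpace ℝ (Fin d)) (i : Fin d) : |x i| ≤ ‖x‖ := by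
  rw [EuclideanSpace.norm_eq]
  have h : ‖x i‖^2 ≤ ∑ j, ‖x j‖^2 :=
    Finset.single_le_sum (f := fun j => ‖x j‖^2) (fun j _ => sq_nonneg _) (Finset.mem_univ i)
  calc |x i| = Real.sqrt (‖x i‖^2) := by
        rw [Real.norm_eq_abs, Real.sqrt_sq (abs_nonneg _)]
      _ ≤ _ := Real.sqrt_le_sqrt h

noncomputable def liftTuple {d M : ℕ} (m : ℕ) (hmM : m < M)
    (u : {x : Fin M // x ∈ Finset.Iio (⟨m, hmM⟩ : Fin M)} → EuclideanSpace ℝ (Fin d)) :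
    ℕ → EuclideanSpace ℝ (Fin d) :=
  fun i => if h : i < m then u ⟨⟨i, h.trans hmM⟩, Finset.mem_Iio.mpr (Fin.mk_lt_mk.mpr h)⟩ else 0

lemma liftTuple_measurable {d M : ℕ} (m : ℕ) (hmM : m < M) (i : ℕ) :
    Measurable (fun u : {x : Fin M // x ∈ Finset.Iio (⟨m, hmM⟩ : Fin M)} → EuclideanSpace ℝ (Fin d)
      => liftTuple m hmM u i) := by
  unfold liftTuple
  split_ifs with h
  · exact measurable_pi_apply _
  · exact measurable_const

/-- **One-step in-tube recursion bound.**
In the stochastic inner recursion setup, for every `m = 1, …, M-1`,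
`E[‖e (m+1)‖² 1_{τ_r > m}] ≤ ρ² E[‖e m‖² 1_{τ_r > m}] + σ²ν²`,
where `{τ_r > m} = {‖e 1‖ ≤ r, …, ‖e m‖ ≤ r}`. -/
theorem one_step_in_tube_recursion
    {Ω : Type*} [MeasureSpace Ω] [IsProbabilityMeasure (ℙ : Measure Ω)]
    {d : ℕ} {M : ℕ} (hM : 1 ≤ M)
    (ξ : ℕ → Ω → EuclideanSpace ℝ (Fin d))
    (hξmeas : ∀ m, Measurable (ξ m))
    (hξindep : iIndepFun (fun m : Fin M => ξ (m : ℕ)) ℙ)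
    (hξint : ∀ m, m < M → Integrable (ξ m) ℙ)
    (hξsq : ∀ m, m < M → Integrable (fun ω => ‖ξ m ω‖ ^ 2) ℙ)
    (hξmean : ∀ m, m < M → ∫ ω, ξ m ω = 0)
    {ν : ℝ} (hν : 0 ≤ ν)
    (hξmom : ∀ m, m < M → ∫ ω, ‖ξ m ω‖ ^ 2 ≤ ν ^ 2)
    {σ : ℝ} (hσ : 0 ≤ σ)
    (F : EuclideanSpace ℝ (Fin d) → EuclideanSpace ℝ (Fin d))
    (hF : Measurable F)
    (z : ℕ → EuclideanSpace ℝ (Fin d))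
    (hz : ∀ m, 1 ≤ m → m < M → z (m + 1) = F (z m))
    (ζ : ℕ → Ω → EuclideanSpace ℝ (Fin d))
    (hζ1 : ∀ ω, ζ 1 ω = z 1 + σ • ξ 0 ω)
    (hζ : ∀ m, 1 ≤ m → m < M → ∀ ω, ζ (m + 1) ω = F (ζ m ω) + σ • ξ m ω)
    {r : ℝ} (hr : 0 < r)
    {ρ : ℝ} (hρ0 : 0 ≤ ρ) (hρ1 : ρ < 1)
    (hLip : ∀ a ∈ ⋃ m ∈ Set.Icc 1 M, Metric.closedBall (z m) r,
            ∀ b ∈ ⋃ m ∈ Set.Icc 1 M, Metric.closedBall (z m) r,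
            ‖F a - F b‖ ≤ ρ * ‖a - b‖) :
    ∀ m, 1 ≤ m → m < M →
      (∫ ω in {ω | ∀ k, 1 ≤ k → k ≤ m → ‖ζ k ω - z k‖ ≤ r}, ‖ζ (m + 1) ω - z (m + 1)‖ ^ 2)
        ≤ ρ ^ 2 * (∫ ω in {ω | ∀ k, 1 ≤ k → k ≤ m → ‖ζ k ω - z k‖ ≤ r}, ‖ζ m ω - z m‖ ^ 2)
            + σ ^ 2 * ν ^ 2 := by
  intro m hm1 hmM
  -- measurability of the trajectory
  have hζmeas : ∀ k, 1 ≤ k → k ≤ M → Measurable (ζ k) := by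
    intro k
    induction k with
    | zero => omega
    | succ n ih =>
      intro _ hnM
      rcases Nat.eq_zero_or_pos n with h0 | hn
      · subst h0
        have : ζ 1 = fun ω => z 1 + σ • ξ 0 ω := funext hζ1
        rw [this]
        exact measurable_const.add ((hξmeas 0).const_smul σ)
      · have : ζ (n+1) = fun ω => F (ζ n ω) + σ • ξ n ω := funext (hζ n hn (by omega))
        rw [this]
        exact (hF.comp (ih hn (by omega))).add ((hξmeas n).const_smul σ)
  set A : Set Ω := {ω | ∀ k, 1 ≤ k → k ≤ m → ‖ζ k ω - z k‖ ≤ r} with hA_def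
  have hA : MeasurableSet A := by
    have : A = ⋂ (k : ℕ), ⋂ (_ : 1 ≤ k), ⋂ (_ : k ≤ m), {ω | ‖ζ k ω - z k‖ ≤ r} := by
      ext ω; simp [hA_def]
    rw [this]
    refine MeasurableSet.iInter fun k => MeasurableSet.iInter fun hk1 =>
      MeasurableSet.iInter fun hkm => ?_
    exact measurableSet_le ((hζmeas k hk1 (hkm.trans hmM.le)).sub measurable_const).norm
      measurable_const
  -- the deterministic/stochastic difference at step m+1
  have hYmeas : Measurable (fun ω => F (ζ m ω) - F (z m)) :=
    (hF.comp (hζmeas m hm1 hmM.le)).sub measurable_const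
  have hWmeas : Measurable (A.indicator (fun ω => F (ζ m ω) - F (z m))) :=
    hYmeas.indicator hA
  -- tube bounds
  have hem_le : ∀ ω ∈ A, ‖ζ m ω - z m‖ ≤ r := fun ω hω => hω m hm1 le_rfl
  have hYle : ∀ ω ∈ A, ‖F (ζ m ω) - F (z m)‖ ≤ ρ * ‖ζ m ω - z m‖ := by
    intro ω hω
    refine hLip _ ?_ _ ?_
    · exact Set.mem_biUnion (Set.mem_Icc.mpr ⟨hm1, hmM.le⟩)
        (Metric.mem_closedBall.mpr (by rw [dist_eq_norm]; exact hem_le ω hω))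
    · exact Set.mem_biUnion (Set.mem_Icc.mpr ⟨hm1, hmM.le⟩) (Metric.mem_closedBall_self hr.le)
  have hYr : ∀ ω ∈ A, ‖F (ζ m ω) - F (z m)‖ ≤ ρ * r := fun ω hω =>
    (hYle ω hω).trans (mul_le_mul_of_nonneg_left (hem_le ω hω) hρ0)
  have hWle : ∀ ω, ‖A.indicator (fun ω => F (ζ m ω) - F (z m)) ω‖ ≤ ρ * r := by
    intro ω
    by_cases hω : ω ∈ A
    · rw [Set.indicator_of_mem hω]; exact hYr ω hω
    · rw [Set.indicator_of_notMem hω]; simpa using mul_nonneg hρ0 hr.le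
  -- pointwise expansion
  have hkey : ∀ ω, ‖ζ (m+1) ω - z (m+1)‖^2
      = ‖F (ζ m ω) - F (z m)‖^2 + (2*σ) * (inner ℝ (F (ζ m ω) - F (z m)) (ξ m ω) : ℝ)
        + σ^2 * ‖ξ m ω‖^2 := by
    intro ω
    have h1 : ζ (m+1) ω - z (m+1) = (F (ζ m ω) - F (z m)) + σ • ξ m ω := by
      rw [hζ m hm1 hmM ω, hz m hm1 hmM]
      abel
    rw [h1, norm_add_sq_real, real_inner_smul_right, norm_smul, Real.norm_eq_abs,
      abs_of_nonneg hσ, mul_pow]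
    ring
  -- integrabilities
  have hI1 : Integrable (fun ω => A.indicator (fun ω => ‖F (ζ m ω) - F (z m)‖^2) ω) ℙ := by
    refine (integrable_const ((ρ*r)^2)).mono'
      (((hYmeas.norm.pow_const 2).indicator hA).aestronglyMeasurable) (ae_of_all _ ?_)
    intro ω
    by_cases hω : ω ∈ A
    · rw [Set.indicator_of_mem hω, Real.norm_eq_abs, abs_of_nonneg (by positivity)]
      exact pow_le_pow_left₀ (norm_nonneg _) (hYr ω hω) 2
    · rw [Set.indicator_of_notMem hω]
      simpa using sq_nonneg (ρ*r)
  have hIEm : Integrable (fun ω => A.indicator (fun ω => ‖ζ m ω - z m‖^2) ω) ℙ := by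
    refine (integrable_const (r^2)).mono'
      (((((hζmeas m hm1 hmM.le).sub measurable_const).norm.pow_const 2).indicator
        hA).aestronglyMeasurable) (ae_of_all _ ?_)
    intro ω
    by_cases hω : ω ∈ A
    · rw [Set.indicator_of_mem hω, Real.norm_eq_abs, abs_of_nonneg (by positivity)]
      exact pow_le_pow_left₀ (norm_nonneg _) (hem_le ω hω) 2
    · rw [Set.indicator_of_notMem hω]
      simpa using sq_nonneg r
  have hI2 : Integrable (fun ω =>
      (inner ℝ (A.indicator (fun ω => F (ζ m ω) - F (z m)) ω) (ξ m ω) : ℝ)) ℙ := by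
    refine ((hξint m hmM).norm.const_mul (ρ*r)).mono'
      ((hWmeas.inner (hξmeas m)).aestronglyMeasurable) (ae_of_all _ ?_)
    intro ω
    calc ‖(inner ℝ (A.indicator (fun ω => F (ζ m ω) - F (z m)) ω) (ξ m ω) : ℝ)‖
        ≤ ‖A.indicator (fun ω => F (ζ m ω) - F (z m)) ω‖ * ‖ξ m ω‖ := norm_inner_le_norm _ _
      _ ≤ (ρ*r) * ‖ξ m ω‖ := mul_le_mul_of_nonneg_right (hWle ω) (norm_nonneg _)
  have hI3 : Integrable (fun ω => A.indicator (fun ω => ‖ξ m ω‖^2) ω) ℙ :=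
    (hξsq m hmM).indicator hA
  -- ζ in terms of traj
  have hζtraj : ∀ k, 1 ≤ k → k ≤ M → ∀ ω, ζ k ω = traj F (z 1) σ (fun i => ξ i ω) (k - 1) := by
    intro k
    induction k with
    | zero => omega
    | succ n ih =>
      intro _ hnM ω
      rcases Nat.eq_zero_or_pos n with h0 | hn
      · subst h0; simpa [traj] using hζ1 ω
      · have hnM' : n < M := by omega
        rw [hζ n hn hnM' ω, ih hn (by omega) ω]
        obtain ⟨j, rfl⟩ : ∃ j, n = j + 1 := ⟨n - 1, by omega⟩
        simp [traj]
  -- independence of the indicator-trimmed difference from ξ m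
  have hWind : IndepFun (A.indicator (fun ω => F (ζ m ω) - F (z m))) (ξ m) ℙ := by
    classical
    have hdisj : Disjoint (Finset.Iio (⟨m, hmM⟩ : Fin M)) {(⟨m, hmM⟩ : Fin M)} := by
      simp [Finset.disjoint_singleton_right]
    have hST := hξindep.indepFun_finset (Finset.Iio (⟨m, hmM⟩ : Fin M)) {(⟨m, hmM⟩ : Fin M)}
      hdisj (fun i => hξmeas i)
    have htz : ∀ ω, ∀ k, 1 ≤ k → k ≤ m →
        traj F (z 1) σ (liftTuple m hmM
          (fun i : {x : Fin M // x ∈ Finset.Iio (⟨m, hmM⟩ : Fin M)} => ξ ((i : Fin M) : ℕ) ω))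
          (k - 1) = ζ k ω := by
      intro ω k hk1 hkm
      rw [hζtraj k hk1 (hkm.trans hmM.le) ω]
      apply traj_congr
      intro i hi
      have him : i < m := by omega
      simp [liftTuple, him]
    set g : ({x : Fin M // x ∈ Finset.Iio (⟨m, hmM⟩ : Fin M)} → EuclideanSpace ℝ (Fin d)) →
        EuclideanSpace ℝ (Fin d) :=
      fun u => Set.indicator
        {u | ∀ k, 1 ≤ k → k ≤ m → ‖traj F (z 1) σ (liftTuple m hmM u) (k-1) - z k‖ ≤ r}
        (fun u => F (traj F (z 1) σ (liftTuple m hmM u) (m-1)) - F (z m)) u with hg_def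
    have hBmeas : MeasurableSet
        {u : {x : Fin M // x ∈ Finset.Iio (⟨m, hmM⟩ : Fin M)} → EuclideanSpace ℝ (Fin d) |
          ∀ k, 1 ≤ k → k ≤ m → ‖traj F (z 1) σ (liftTuple m hmM u) (k-1) - z k‖ ≤ r} := by
      have : {u : {x : Fin M // x ∈ Finset.Iio (⟨m, hmM⟩ : Fin M)} → EuclideanSpace ℝ (Fin d) |
          ∀ k, 1 ≤ k → k ≤ m → ‖traj F (z 1) σ (liftTuple m hmM u) (k-1) - z k‖ ≤ r}
          = ⋂ (k : ℕ), ⋂ (_ : 1 ≤ k), ⋂ (_ : k ≤ m),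
            {u | ‖traj F (z 1) σ (liftTuple m hmM u) (k-1) - z k‖ ≤ r} := by
        ext u; simp
      rw [this]
      refine MeasurableSet.iInter fun k => MeasurableSet.iInter fun hk1 =>
        MeasurableSet.iInter fun hkm => ?_
      exact measurableSet_le
        (((traj_measurable hF (z 1) σ (liftTuple_measurable m hmM) (k-1)).sub
          measurable_const).norm) measurable_const
    have hgmeas : Measurable g := by
      exact ((hF.comp (traj_measurable hF (z 1) σ (liftTuple_measurable m hmM) (m-1))).sub
        measurable_const).indicator hBmeas
    have hgW : ∀ ω, g (fun i : {x : Fin M // x ∈ Finset.Iio (⟨m, hmM⟩ : Fin M)} =>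
        ξ ((i : Fin M) : ℕ) ω) = A.indicator (fun ω => F (ζ m ω) - F (z m)) ω := by
      intro ω
      have hmem : ((fun i : {x : Fin M // x ∈ Finset.Iio (⟨m, hmM⟩ : Fin M)} =>
          ξ ((i : Fin M) : ℕ) ω) ∈
          {u | ∀ k, 1 ≤ k → k ≤ m → ‖traj F (z 1) σ (liftTuple m hmM u) (k-1) - z k‖ ≤ r})
          ↔ ω ∈ A := by
        constructor
        · intro h k hk1 hkm
          have := h k hk1 hkm
          rwa [htz ω k hk1 hkm] at this
        · intro h k hk1 hkm
          rw [htz ω k hk1 hkm]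
          exact h k hk1 hkm
      by_cases hω : ω ∈ A
      · simp only [hg_def]
        rw [Set.indicator_of_mem (hmem.mpr hω), Set.indicator_of_mem hω,
          htz ω m hm1 le_rfl]
      · simp only [hg_def]
        rw [Set.indicator_of_notMem (fun h => hω (hmem.mp h)), Set.indicator_of_notMem hω]
    have hcomp := hST.comp hgmeas
      (measurable_pi_apply (⟨(⟨m, hmM⟩ : Fin M), Finset.mem_singleton_self _⟩ :
        {x : Fin M // x ∈ ({(⟨m, hmM⟩ : Fin M)} : Finset (Fin M))}))
    have heq1 : (g ∘ fun ω (i : {x : Fin M // x ∈ Finset.Iio (⟨m, hmM⟩ : Fin M)}) =>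
        ξ ((i : Fin M) : ℕ) ω) = A.indicator (fun ω => F (ζ m ω) - F (z m)) := funext hgW
    have heq2 : ((fun v : {x : Fin M // x ∈ ({(⟨m, hmM⟩ : Fin M)} : Finset (Fin M))} →
        EuclideanSpace ℝ (Fin d) =>
          v ⟨(⟨m, hmM⟩ : Fin M), Finset.mem_singleton_self _⟩) ∘
        (fun ω (i : {x : Fin M // x ∈ ({(⟨m, hmM⟩ : Fin M)} : Finset (Fin M))}) =>
          ξ ((i : Fin M) : ℕ) ω)) = ξ m := rfl
    rw [heq1, heq2] at hcomp
    exact hcomp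
  -- vanishing cross term
  have hcross : (∫ ω, (inner ℝ (A.indicator (fun ω => F (ζ m ω) - F (z m)) ω) (ξ m ω) : ℝ)) = 0 := by
    have hprojmeas : ∀ i : Fin d, Measurable (fun x : EuclideanSpace ℝ (Fin d) => x i) :=
      fun i => (EuclideanSpace.proj (𝕜 := ℝ) i).measurable
    have hint : ∀ i : Fin d, Integrable
        (fun ω => A.indicator (fun ω => F (ζ m ω) - F (z m)) ω i * ξ m ω i) ℙ := by
      intro i
      refine ((hξint m hmM).norm.const_mul (ρ * r)).mono'
        (((hprojmeas i).comp hWmeas).mul ((hprojmeas i).comp (hξmeas m))).aestronglyMeasurable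
        (ae_of_all _ ?_)
      intro ω
      have h1 : |A.indicator (fun ω => F (ζ m ω) - F (z m)) ω i| ≤ ρ * r :=
        (coord_abs_le_norm _ i).trans (hWle ω)
      have h2 : |ξ m ω i| ≤ ‖ξ m ω‖ := coord_abs_le_norm _ i
      calc ‖A.indicator (fun ω => F (ζ m ω) - F (z m)) ω i * ξ m ω i‖
          = |A.indicator (fun ω => F (ζ m ω) - F (z m)) ω i| * |ξ m ω i| := by
            rw [Real.norm_eq_abs, abs_mul]
        _ ≤ (ρ * r) * ‖ξ m ω‖ :=
            mul_le_mul h1 h2 (abs_nonneg _) (mul_nonneg hρ0 hr.le)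
    have hinner : ∀ ω, (inner ℝ (A.indicator (fun ω => F (ζ m ω) - F (z m)) ω) (ξ m ω) : ℝ)
        = ∑ i, A.indicator (fun ω => F (ζ m ω) - F (z m)) ω i * ξ m ω i := by
      intro ω; simp [PiLp.inner_apply, RCLike.inner_apply, mul_comm]
    simp_rw [hinner]
    rw [integral_finset_sum _ (fun i _ => hint i)]
    refine Finset.sum_eq_zero fun i _ => ?_
    have hind_i : IndepFun (fun ω => A.indicator (fun ω => F (ζ m ω) - F (z m)) ω i)
        (fun ω => ξ m ω i) ℙ := hWind.comp (hprojmeas i) (hprojmeas i)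
    have hm0 : (∫ ω, ξ m ω i) = 0 := by
      have hcomm := (EuclideanSpace.proj (𝕜 := ℝ) i).integral_comp_comm (hξint m hmM)
      simpa [hξmean m hmM] using hcomm
    have := hind_i.integral_fun_mul_eq_mul_integral
      (((hprojmeas i).comp hWmeas).aestronglyMeasurable)
      (((hprojmeas i).comp (hξmeas m)).aestronglyMeasurable)
    calc (∫ ω, A.indicator (fun ω => F (ζ m ω) - F (z m)) ω i * ξ m ω i)
        = (∫ ω, A.indicator (fun ω => F (ζ m ω) - F (z m)) ω i) * (∫ ω, ξ m ω i) := this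
      _ = 0 := by rw [hm0, mul_zero]
  -- assemble
  rw [← integral_indicator hA, ← integral_indicator hA]
  have hsplit : ∀ ω, A.indicator (fun ω => ‖ζ (m+1) ω - z (m+1)‖^2) ω
      = A.indicator (fun ω => ‖F (ζ m ω) - F (z m)‖^2) ω
        + (2*σ) * (inner ℝ (A.indicator (fun ω => F (ζ m ω) - F (z m)) ω) (ξ m ω) : ℝ)
        + σ^2 * A.indicator (fun ω => ‖ξ m ω‖^2) ω := by
    intro ω
    by_cases hω : ω ∈ A
    · simp only [Set.indicator_of_mem hω]
      exact hkey ω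
    · simp only [Set.indicator_of_notMem hω]
      simp
  simp only [hsplit]
  have hI12 : Integrable (fun ω => A.indicator (fun ω => ‖F (ζ m ω) - F (z m)‖^2) ω
      + (2*σ) * (inner ℝ (A.indicator (fun ω => F (ζ m ω) - F (z m)) ω) (ξ m ω) : ℝ)) ℙ := by
    exact hI1.add (hI2.const_mul (2*σ))
  have hI3' : Integrable (fun ω => σ^2 * A.indicator (fun ω => ‖ξ m ω‖^2) ω) ℙ := by
    exact hI3.const_mul (σ^2)
  have hI2' : Integrable (fun ω =>
      (2*σ) * (inner ℝ (A.indicator (fun ω => F (ζ m ω) - F (z m)) ω) (ξ m ω) : ℝ)) ℙ := by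
    exact hI2.const_mul (2*σ)
  rw [integral_add hI12 hI3', integral_add hI1 hI2', integral_const_mul, integral_const_mul,
    hcross, mul_zero, add_zero]
  have hb1 : (∫ ω, A.indicator (fun ω => ‖F (ζ m ω) - F (z m)‖^2) ω)
      ≤ ρ^2 * ∫ ω, A.indicator (fun ω => ‖ζ m ω - z m‖^2) ω := by
    rw [← integral_const_mul]
    refine integral_mono hI1 (hIEm.const_mul _) ?_
    intro ω
    by_cases hω : ω ∈ A
    · simp only [Set.indicator_of_mem hω]
      calc ‖F (ζ m ω) - F (z m)‖^2 ≤ (ρ * ‖ζ m ω - z m‖)^2 :=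
            pow_le_pow_left₀ (norm_nonneg _) (hYle ω hω) 2
        _ = ρ^2 * ‖ζ m ω - z m‖^2 := by ring
    · simp [Set.indicator_of_notMem hω]
  have hb3 : (∫ ω, A.indicator (fun ω => ‖ξ m ω‖^2) ω) ≤ ν^2 := by
    refine le_trans (integral_mono hI3 (hξsq m hmM) ?_) (hξmom m hmM)
    exact Set.indicator_le_self' (fun ω _ => sq_nonneg _)
  have := mul_le_mul_of_nonneg_left hb3 (sq_nonneg σ)
  linarith
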